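/- Let q = 2^{2t+1} be an odd power of 2, F = 𝔽_{q²}, n = 3q² − 2q, and let (a₁,b₁),…,(a_n,b_n) be an enumeration of all pairs in F × F with (b_k)^q + b_k = (a_k)³. For a nonnegative integer m let C_m ⊆ F^n be the F-linear span of the vectors ((a_k)^i (b_k)^j)_{k=1,…,n} over all pairs (i,j) of nonnegative integers with j ≤ q − 1 and qi + 3j ≤ m. If m ≥ 2q − 3, then every nonzero vector in the Hermitian dual C_m^{⊥H} = {v ∈ F^n : Σ_k v_k (c_k)^q = 0 for all c ∈ C_m} has Hamming weight at least m − 2q + 4. -/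

import Mathlib

set_option maxHeartbeats 2000000 in
theorem second_curve_hermitian_dual_distance (t : ℕ) (q : ℕ) (hq : q = 2 ^ (2 * t + 1))
    (F : Type) [Field F] [Fintype F] (hF : Fintype.card F = q ^ 2)
    (n : ℕ) (hn : n = 3 * q ^ 2 - 2 * q)
    (pt : Fin n → F × F) (hinj : Function.Injective pt)
    (hrange : ∀ p : F × F, p ∈ Set.range pt ↔ p.2 ^ q + p.2 = p.1 ^ 3)
    (C : ℕ → Submodule F (Fin n → F))
    (hC : ∀ m : ℕ, C m = Submodule.span F
      {v : Fin n → F | ∃ i j : ℕ, j ≤ q - 1 ∧ q * i + 3 * j ≤ m ∧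
        v = fun k => (pt k).1 ^ i * (pt k).2 ^ j})
    (m : ℕ) (hm : 2 * q - 3 ≤ m) :
    ∀ v ∈ {v : Fin n → F | ∀ c ∈ C m, ∑ k, v k * (c k) ^ q = 0}, v ≠ 0 →
      m + 4 - 2 * q ≤ Nat.card {k : Fin n // v k ≠ 0} := by
  classical
  intro v hv hv0
  have hq2 : 2 ≤ q := by
    rw [hq]; calc 2 = 2 ^ 1 := rfl
    _ ≤ 2 ^ (2 * t + 1) := Nat.pow_le_pow_right (by norm_num) (by omega)
  have hq0 : q ≠ 0 := by omega
  have hq3 : q % 3 = 2 := by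
    have : ∀ u : ℕ, 2 ^ (2 * u + 1) % 3 = 2 := by
      intro u
      induction u with
      | zero => rfl
      | succ u ih =>
        have h2 : 2 * (u + 1) + 1 = (2 * u + 1) + 2 := by ring
        rw [h2, pow_add]
        omega
    rw [hq]; exact this t
  -- characteristic 2 and Frobenius
  haveI hfact2 : Fact (Nat.Prime 2) := ⟨Nat.prime_two⟩
  have hchar : CharP F 2 := by
    have hp : Nat.Prime (ringChar F) := CharP.char_is_prime F (ringChar F)
    obtain ⟨nn, -, hcard⟩ := FiniteField.card F (ringChar F)
    have hdvd : ringChar F ∣ q ^ 2 := by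
      rw [← hF, hcard]
      exact dvd_pow_self _ (by exact_mod_cast nn.ne_zero)
    have hdvd2 : ringChar F ∣ 2 := by
      have h1 := hp.dvd_of_dvd_pow hdvd
      rw [hq] at h1
      exact hp.dvd_of_dvd_pow h1
    have h2 : ringChar F = 2 :=
      (Nat.prime_dvd_prime_iff_eq hp Nat.prime_two).mp hdvd2
    rw [← h2]
    exact ringChar.charP F
  haveI := hchar
  haveI hexpchar : ExpChar F 2 := ExpChar.prime Nat.prime_two
  have hfrobadd : ∀ x y : F, (x + y) ^ q = x ^ q + y ^ q := by
    intro x y; rw [hq]; exact add_pow_char_pow x y 2 (2 * t + 1)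
  have hpowcard : ∀ x : F, (x ^ q) ^ q = x := by
    intro x
    have h1 := FiniteField.pow_card x
    rw [hF] at h1
    rw [← pow_mul, ← pow_two q]
    exact h1
  obtain ⟨w, hw⟩ : ∃ w : Fin n → F, ∀ k, w k = (v k) ^ q := ⟨_, fun _ => rfl⟩
  obtain ⟨s, hs⟩ : ∃ s : ℕ → ℕ → F,
      ∀ i j, s i j = ∑ k, w k * ((pt k).1 ^ i * (pt k).2 ^ j) := ⟨_, fun _ _ => rfl⟩
  have hcurve : ∀ k, ((pt k).2) ^ q = (pt k).1 ^ 3 - (pt k).2 := by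
    intro k
    exact eq_sub_of_add_eq ((hrange (pt k)).mp ⟨k, rfl⟩)
  -- reduction identity
  have hred : ∀ i j, s i (j + q) = s (i + 3) j - s i (j + 1) := by
    intro i j
    rw [hs, hs, hs, ← Finset.sum_sub_distrib]
    apply Finset.sum_congr rfl
    intro k _
    rw [pow_add, hcurve k]
    ring
  -- syndromes of low order vanish
  have hvanish : ∀ i j, j ≤ q - 1 → q * i + 3 * j ≤ m → s i j = 0 := by
    intro i j hj hm'
    have hc : (fun k => (pt k).1 ^ i * (pt k).2 ^ j) ∈ C m := by
      rw [hC]; exact Submodule.subset_span ⟨i, j, hj, hm', rfl⟩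
    have h0 := hv _ hc
    have hpow : (s i j) ^ q = 0 := by
      rw [hs, hq, sum_pow_char_pow, ← hq]
      rw [← h0]
      apply Finset.sum_congr rfl
      intro k _
      rw [hq, ← hq]
      rw [mul_pow]
      congr 1
      rw [hw, hpowcard]
    exact (pow_eq_zero_iff hq0).mp hpow
  -- some syndrome is nonzero
  have hex : ∃ i j, s i j ≠ 0 := by
    by_contra hall
    push_neg at hall
    apply hv0
    have hwz : ∀ k0, w k0 = 0 := by
      intro k0
      set MS : Submodule F (Fin n → F) :=
        Submodule.span F {g : Fin n → F | ∃ i j : ℕ, g = fun k => (pt k).1 ^ i * (pt k).2 ^ j}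
        with hMS
      have hsum0 : ∀ g ∈ MS, ∑ k, w k * g k = 0 := by
        intro g hg
        induction hg using Submodule.span_induction with
        | mem x hx =>
          obtain ⟨i, j, rfl⟩ := hx
          have h1 := hall i j
          rw [hs] at h1
          simpa using h1
        | zero => simp
        | add x y hx hy ihx ihy =>
          simp only [Pi.add_apply, mul_add, Finset.sum_add_distrib, ihx, ihy, add_zero]
        | smul c x hx ih =>
          have he : ∑ k, w k * (c • x) k = c * ∑ k, w k * x k := by
            rw [Finset.mul_sum]
            apply Finset.sum_congr rfl
            intro k _
            simp only [Pi.smul_apply, smul_eq_mul]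
            ring
          rw [he, ih, mul_zero]
      have hmulx : ∀ g ∈ MS, (fun k => (pt k).1 * g k) ∈ MS := by
        intro g hg
        induction hg using Submodule.span_induction with
        | mem x hx =>
          obtain ⟨i, j, rfl⟩ := hx
          apply Submodule.subset_span
          exact ⟨i + 1, j, by funext k; rw [pow_succ]; ring⟩
        | zero =>
          have h0 : (fun k => (pt k).1 * (0 : Fin n → F) k) = (0 : Fin n → F) := by
            funext k; simp
          rw [h0]; exact zero_mem _
        | add x y hx hy ihx ihy =>
          have h0 : (fun k => (pt k).1 * (x + y) k)
              = (fun k => (pt k).1 * x k) + (fun k => (pt k).1 * y k) := by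
            funext k; simp [mul_add]
          rw [h0]; exact add_mem ihx ihy
        | smul c x hx ih =>
          have h0 : (fun k => (pt k).1 * (c • x) k) = c • (fun k => (pt k).1 * x k) := by
            funext k; simp only [Pi.smul_apply, smul_eq_mul]; ring
          rw [h0]; exact Submodule.smul_mem _ _ ih
      have hmuly : ∀ g ∈ MS, (fun k => (pt k).2 * g k) ∈ MS := by
        intro g hg
        induction hg using Submodule.span_induction with
        | mem x hx =>
          obtain ⟨i, j, rfl⟩ := hx
          apply Submodule.subset_span
          exact ⟨i, j + 1, by funext k; rw [pow_succ]; ring⟩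
        | zero =>
          have h0 : (fun k => (pt k).2 * (0 : Fin n → F) k) = (0 : Fin n → F) := by
            funext k; simp
          rw [h0]; exact zero_mem _
        | add x y hx hy ihx ihy =>
          have h0 : (fun k => (pt k).2 * (x + y) k)
              = (fun k => (pt k).2 * x k) + (fun k => (pt k).2 * y k) := by
            funext k; simp [mul_add]
          rw [h0]; exact add_mem ihx ihy
        | smul c x hx ih =>
          have h0 : (fun k => (pt k).2 * (c • x) k) = c • (fun k => (pt k).2 * x k) := by
            funext k; simp only [Pi.smul_apply, smul_eq_mul]; ring
          rw [h0]; exact Submodule.smul_mem _ _ ih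
      have hprodmem : ∀ T : Finset (Fin n),
          (fun k => ∏ l ∈ T, (if (pt l).1 = (pt k0).1
            then (pt k).2 - (pt l).2 else (pt k).1 - (pt l).1)) ∈ MS := by
        intro T
        induction T using Finset.induction_on with
        | empty =>
          have h1 : (fun k : Fin n => ∏ l ∈ (∅ : Finset (Fin n)), (if (pt l).1 = (pt k0).1
              then (pt k).2 - (pt l).2 else (pt k).1 - (pt l).1))
              = fun k => (pt k).1 ^ 0 * (pt k).2 ^ 0 := by
            funext k; simp
          rw [h1]; exact Submodule.subset_span ⟨0, 0, rfl⟩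
        | insert a T ha ih =>
          by_cases hcase : (pt a).1 = (pt k0).1
          · have heq : (fun k => ∏ l ∈ insert a T, (if (pt l).1 = (pt k0).1
                then (pt k).2 - (pt l).2 else (pt k).1 - (pt l).1))
                = (fun k => (pt k).2 * (∏ l ∈ T, (if (pt l).1 = (pt k0).1
                    then (pt k).2 - (pt l).2 else (pt k).1 - (pt l).1)))
                  - (pt a).2 • (fun k => ∏ l ∈ T, (if (pt l).1 = (pt k0).1
                    then (pt k).2 - (pt l).2 else (pt k).1 - (pt l).1)) := by
              funext k
              simp only [Finset.prod_insert ha, if_pos hcase, Pi.sub_apply, Pi.smul_apply,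
                smul_eq_mul]
              ring
            rw [heq]
            exact sub_mem (hmuly _ ih) (Submodule.smul_mem _ _ ih)
          · have heq : (fun k => ∏ l ∈ insert a T, (if (pt l).1 = (pt k0).1
                then (pt k).2 - (pt l).2 else (pt k).1 - (pt l).1))
                = (fun k => (pt k).1 * (∏ l ∈ T, (if (pt l).1 = (pt k0).1
                    then (pt k).2 - (pt l).2 else (pt k).1 - (pt l).1)))
                  - (pt a).1 • (fun k => ∏ l ∈ T, (if (pt l).1 = (pt k0).1
                    then (pt k).2 - (pt l).2 else (pt k).1 - (pt l).1)) := by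
              funext k
              simp only [Finset.prod_insert ha, if_neg hcase, Pi.sub_apply, Pi.smul_apply,
                smul_eq_mul]
              ring
            rw [heq]
            exact sub_mem (hmulx _ ih) (Submodule.smul_mem _ _ ih)
      have hf := hsum0 _ (hprodmem (Finset.univ.erase k0))
      rw [Finset.sum_eq_single k0] at hf
      · rcases mul_eq_zero.mp hf with h | h
        · exact h
        · exfalso
          rcases Finset.prod_eq_zero_iff.mp h with ⟨l, hl, hl0⟩
          have hlk : l ≠ k0 := (Finset.mem_erase.mp hl).1
          by_cases hcase : (pt l).1 = (pt k0).1
          · rw [if_pos hcase] at hl0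
            exact hlk (hinj (Prod.ext hcase (sub_eq_zero.mp hl0).symm))
          · rw [if_neg hcase] at hl0
            exact hcase (sub_eq_zero.mp hl0).symm
      · intro k _ hk
        have hz : (∏ l ∈ Finset.univ.erase k0, (if (pt l).1 = (pt k0).1
            then (pt k).2 - (pt l).2 else (pt k).1 - (pt l).1)) = 0 := by
          apply Finset.prod_eq_zero (Finset.mem_erase.mpr ⟨hk, Finset.mem_univ k⟩)
          by_cases hcase : (pt k).1 = (pt k0).1
          · rw [if_pos hcase, sub_self]
          · rw [if_neg hcase, sub_self]
        rw [hz, mul_zero]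
      · intro h; exact absurd (Finset.mem_univ k0) h
    funext k
    have h1 := hwz k
    rw [hw] at h1
    exact (pow_eq_zero_iff hq0).mp h1
  -- minimal order rho with a nonzero syndrome (canonical form)
  obtain ⟨P, hP⟩ : ∃ P : ℕ → Prop, ∀ N,
      P N ↔ ∃ i j, j ≤ q - 1 ∧ q * i + 3 * j = N ∧ s i j ≠ 0 := ⟨_, fun _ => Iff.rfl⟩
  have hexN : ∃ N, P N := by
    obtain ⟨i, j, hsij⟩ := hex
    have key : ∀ j i, s i j ≠ 0 → ∃ i' j', j' ≤ q - 1 ∧ s i' j' ≠ 0 := by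
      intro j
      induction j using Nat.strong_induction_on with
      | _ j ih =>
        intro i hsij
        by_cases hj : j ≤ q - 1
        · exact ⟨i, j, hj, hsij⟩
        · have hjq : q ≤ j := by omega
          obtain ⟨j', hj'⟩ := Nat.exists_eq_add_of_le hjq
          rw [hj', add_comm q j', hred] at hsij
          by_cases h1 : s (i + 3) j' = 0
          · rw [h1, zero_sub, neg_ne_zero] at hsij
            exact ih (j' + 1) (by omega) i hsij
          · exact ih j' (by omega) (i + 3) h1
    obtain ⟨i', j', hj', hs'⟩ := key j i hsij
    exact ⟨q * i' + 3 * j', (hP _).mpr ⟨i', j', hj', rfl, hs'⟩⟩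
  set ρ := Nat.find hexN with hρdef
  have hρ := Nat.find_spec hexN
  have hρmin : ∀ N, N < ρ → ¬ P N := fun N h => Nat.find_min hexN h
  rw [hP] at hρ
  obtain ⟨i₀, j₀, hj₀, hord₀, hs₀⟩ := hρ
  have hmρ : m < ρ := by
    by_contra hcon
    push_neg at hcon
    exact hs₀ (hvanish i₀ j₀ hj₀ (by omega))
  have hlow : ∀ j i, q * i + 3 * j < ρ → s i j = 0 := by
    intro j
    induction j using Nat.strong_induction_on with
    | _ j ih =>
      intro i hlt
      by_cases hj : j ≤ q - 1
      · by_contra hne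
        exact hρmin _ hlt ((hP _).mpr ⟨i, j, hj, rfl, hne⟩)
      · have hjq : q ≤ j := by omega
        obtain ⟨j', hj'⟩ := Nat.exists_eq_add_of_le hjq
        rw [hj', add_comm q j', hred]
        have h1 : s (i + 3) j' = 0 := by
          apply ih j' (by omega) (i + 3)
          have h4 : q * (i + 3) + 3 * j' = q * i + 3 * (q + j') := by ring
          rw [h4, ← hj']; exact hlt
        have h2 : s i (j' + 1) = 0 := by
          apply ih (j' + 1) (by omega) i
          exact lt_of_le_of_lt
            (Nat.add_le_add_left (by omega : 3 * (j' + 1) ≤ 3 * j) (q * i)) hlt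
        rw [h1, h2, sub_zero]
  have hco : Nat.Coprime q 3 := by
    rw [hq]; exact Nat.Coprime.pow_left _ (by decide)
  have huniq : ∀ i j i' j', j ≤ q - 1 → j' ≤ q - 1 →
      q * i + 3 * j = q * i' + 3 * j' → i = i' ∧ j = j' := by
    have key : ∀ i j i' j', j ≤ q - 1 → j' ≤ q - 1 → j ≤ j' →
        q * i + 3 * j = q * i' + 3 * j' → i = i' ∧ j = j' := by
      intro i j i' j' hj hj' hle he
      have he' : 3 * j + q * i = 3 * j' + q * i' := by linarith
      have hmod : 3 * j % q = 3 * j' % q := by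
        rw [← Nat.add_mul_mod_self_left (3 * j) q i, ← Nat.add_mul_mod_self_left (3 * j') q i',
          he']
      have hdvd : q ∣ 3 * j' - 3 * j := (Nat.modEq_iff_dvd' (by omega)).mp hmod
      have heq3 : 3 * j' - 3 * j = (j' - j) * 3 := by omega
      rw [heq3] at hdvd
      have hdvd2 : q ∣ j' - j := hco.dvd_of_dvd_mul_right hdvd
      have hjeq : j = j' := by
        by_contra hne
        have hq' : q ≤ j' - j := Nat.le_of_dvd (by omega) hdvd2
        omega
      subst hjeq
      refine ⟨?_, rfl⟩
      have hqq : q * i = q * i' := by linarith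
      exact Nat.eq_of_mul_eq_mul_left (by omega) hqq
    intro i j i' j' hj hj' he
    rcases le_total j j' with h | h
    · exact key i j i' j' hj hj' h he
    · obtain ⟨h1, h2⟩ := key i' j' i j hj' hj h he.symm
      exact ⟨h1.symm, h2.symm⟩
  have hdiag : ∀ j i, q * i + 3 * j = ρ → s i j = s i₀ j₀ := by
    intro j
    induction j using Nat.strong_induction_on with
    | _ j ih =>
      intro i he
      by_cases hj : j ≤ q - 1
      · obtain ⟨h1, h2⟩ := huniq i j i₀ j₀ hj hj₀ (by rw [he, hord₀])
        rw [h1, h2]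
      · have hjq : q ≤ j := by omega
        obtain ⟨j', hj'⟩ := Nat.exists_eq_add_of_le hjq
        rw [hj', add_comm q j', hred]
        have h2 : s i (j' + 1) = 0 := by
          apply hlow (j' + 1) i
          calc q * i + 3 * (j' + 1) < q * i + 3 * j :=
                Nat.add_lt_add_left (by omega) _
            _ = ρ := he
        have h1 : s (i + 3) j' = s i₀ j₀ := by
          apply ih j' (by omega) (i + 3)
          have h4 : q * (i + 3) + 3 * j' = q * i + 3 * (q + j') := by ring
          rw [h4, ← hj']; exact he
        rw [h1, h2, sub_zero]
  -- the semigroup and the set D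
  obtain ⟨Lam, hLam⟩ : ∃ Lam : ℕ → Prop, ∀ N, Lam N ↔ ∃ i j : ℕ, N = q * i + 3 * j :=
    ⟨_, fun _ => Iff.rfl⟩
  obtain ⟨D, hD⟩ : ∃ D : Finset ℕ,
      D = (Finset.range (ρ + 1)).filter (fun α => Lam α ∧ Lam (ρ - α)) := ⟨_, rfl⟩
  have hDmem : ∀ x : ℕ, x ∈ D ↔ (x < ρ + 1 ∧ (Lam x ∧ Lam (ρ - x))) := by
    intro x
    rw [hD, Finset.mem_filter, Finset.mem_range]
  have hgapcard : ∀ R : ℕ, ((Finset.range R).filter (fun N => ¬ Lam N)).card ≤ q - 1 := by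
    have hmem0 : ∀ N : ℕ, N % 3 = 0 → Lam N := by
      intro N h; rw [hLam]; exact ⟨0, N / 3, by omega⟩
    have hmem1 : ∀ N : ℕ, N % 3 = 1 → 2 * q ≤ N → Lam N := by
      intro N h hN; rw [hLam]; exact ⟨2, (N - 2 * q) / 3, by omega⟩
    have hmem2 : ∀ N : ℕ, N % 3 = 2 → q ≤ N → Lam N := by
      intro N h hN; rw [hLam]; exact ⟨1, (N - q) / 3, by omega⟩
    intro R
    have hsub : (Finset.range R).filter (fun N => ¬ Lam N) ⊆
        ((Finset.range q).filter (fun N => N % 3 = 2)) ∪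
        ((Finset.range (2 * q)).filter (fun N => N % 3 = 1)) := by
      intro N hN
      simp only [Finset.mem_filter, Finset.mem_range, Finset.mem_union] at *
      obtain ⟨-, hNl⟩ := hN
      rcases (by omega : N % 3 = 0 ∨ N % 3 = 1 ∨ N % 3 = 2) with h | h | h
      · exact absurd (hmem0 N h) hNl
      · right
        refine ⟨?_, h⟩
        by_contra hh
        exact hNl (hmem1 N h (by omega))
      · left
        refine ⟨?_, h⟩
        by_contra hh
        exact hNl (hmem2 N h (by omega))
    have h1 : ((Finset.range q).filter (fun N => N % 3 = 2)).card
        ≤ (Finset.range (q / 3)).card := by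
      apply Finset.card_le_card_of_injOn (fun N => N / 3)
      · intro N hN
        simp only [Finset.coe_filter, Set.mem_setOf_eq, Finset.mem_coe, Finset.mem_filter, Finset.mem_range] at *
        omega
      · intro x hx y hy hxy
        simp only [Finset.coe_filter, Set.mem_setOf_eq, Finset.mem_range] at hx hy
        have hxy' : x / 3 = y / 3 := hxy
        omega
    have h2 : ((Finset.range (2 * q)).filter (fun N => N % 3 = 1)).card
        ≤ (Finset.range (2 * (q / 3) + 1)).card := by
      apply Finset.card_le_card_of_injOn (fun N => N / 3)
      · intro N hN
        simp only [Finset.coe_filter, Set.mem_setOf_eq, Finset.mem_coe, Finset.mem_filter, Finset.mem_range] at *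
        omega
      · intro x hx y hy hxy
        simp only [Finset.coe_filter, Set.mem_setOf_eq, Finset.mem_range] at hx hy
        have hxy' : x / 3 = y / 3 := hxy
        omega
    have h3 := Finset.card_le_card hsub
    have h4 := Finset.card_union_le ((Finset.range q).filter (fun N => N % 3 = 2))
      ((Finset.range (2 * q)).filter (fun N => N % 3 = 1))
    simp only [Finset.card_range] at h1 h2
    omega
  have hDcard : m + 4 - 2 * q ≤ D.card := by
    have hcover : Finset.range (ρ + 1) ⊆ D ∪
        (((Finset.range (ρ + 1)).filter (fun N => ¬ Lam N)) ∪
        ((Finset.range (ρ + 1)).filter (fun α => ¬ Lam (ρ - α)))) := by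
      intro α hα
      simp only [hD, Finset.mem_union, Finset.mem_filter, Finset.mem_range] at *
      by_cases h1 : Lam α
      · by_cases h2 : Lam (ρ - α)
        · exact Or.inl ⟨hα, h1, h2⟩
        · exact Or.inr (Or.inr ⟨hα, h2⟩)
      · exact Or.inr (Or.inl ⟨hα, h1⟩)
    have hc1 := Finset.card_le_card hcover
    have hc2 := Finset.card_union_le D
      (((Finset.range (ρ + 1)).filter (fun N => ¬ Lam N)) ∪
        ((Finset.range (ρ + 1)).filter (fun α => ¬ Lam (ρ - α))))
    have hc3 := Finset.card_union_le ((Finset.range (ρ + 1)).filter (fun N => ¬ Lam N))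
      ((Finset.range (ρ + 1)).filter (fun α => ¬ Lam (ρ - α)))
    have hg1 := hgapcard (ρ + 1)
    have hg2 : ((Finset.range (ρ + 1)).filter (fun α => ¬ Lam (ρ - α))).card ≤ q - 1 := by
      refine le_trans (Finset.card_le_card_of_injOn (fun α => ρ - α) ?_ ?_) (hgapcard (ρ + 1))
      · intro α hα
        simp only [Finset.coe_filter, Set.mem_setOf_eq, Finset.mem_coe, Finset.mem_filter, Finset.mem_range] at *
        exact ⟨by omega, hα.2⟩
      · intro x hx y hy hxy
        simp only [Finset.coe_filter, Set.mem_setOf_eq, Finset.mem_range] at hx hy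
        have hxy' : ρ - x = ρ - y := hxy
        omega
    rw [Finset.card_range] at hc1
    omega
  obtain ⟨supp, hsupp⟩ : ∃ supp : Finset (Fin n),
      supp = Finset.univ.filter (fun k => v k ≠ 0) := ⟨_, rfl⟩
  have hsuppcard : Nat.card {k : Fin n // v k ≠ 0} = supp.card := by
    rw [Nat.card_eq_fintype_card, hsupp]
    simp [Fintype.card_subtype]
  suffices hfin : D.card ≤ supp.card by omega
  by_contra hcon
  push_neg at hcon
  -- choose representations
  obtain ⟨I, J, hIJ⟩ : ∃ I J : ℕ → ℕ, ∀ N, Lam N → N = q * I N + 3 * J N := by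
    refine ⟨fun N => if h : ∃ i j : ℕ, N = q * i + 3 * j then h.choose else 0,
            fun N => if h : ∃ i j : ℕ, N = q * i + 3 * j then h.choose_spec.choose else 0,
            fun N hN => ?_⟩
    rw [hLam] at hN
    simp only [dif_pos hN]
    exact hN.choose_spec.choose_spec
  -- the key pairing computation
  have hpair : ∀ (α β : ℕ), Lam α → Lam β →
      (∑ k, w k * (((pt k).1 ^ I α * (pt k).2 ^ J α) * ((pt k).1 ^ I β * (pt k).2 ^ J β)))
        = s (I α + I β) (J α + J β) := by
    intro α β hα hβ
    rw [hs]
    apply Finset.sum_congr rfl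
    intro k _
    rw [pow_add, pow_add]
    ring
  -- the family of restricted monomial vectors cannot be linearly independent
  have hnotLI : ¬ LinearIndependent F (fun (α : {x // x ∈ D}) =>
      (fun k : {k // k ∈ supp} => (pt k.1).1 ^ I α.1 * (pt k.1).2 ^ J α.1)) := by
    intro hLI
    have h1 := hLI.fintype_card_le_finrank
    rw [Module.finrank_pi] at h1
    simp only [Fintype.card_coe] at h1
    omega
  obtain ⟨g, hgsum, α₁, hα₁⟩ := Fintype.not_linearIndependent_iff.mp hnotLI
  obtain ⟨T, hT⟩ : ∃ T : Finset {x // x ∈ D},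
      T = Finset.univ.filter (fun α => g α ≠ 0) := ⟨_, rfl⟩
  have hα₁T : α₁ ∈ T := by simp [hT, hα₁]
  have hTne : (T.image (fun α => α.1)).Nonempty :=
    ⟨α₁.1, Finset.mem_image.mpr ⟨α₁, hα₁T, rfl⟩⟩
  obtain ⟨αs, hαs⟩ : ∃ x : ℕ, x = (T.image (fun α => α.1)).max' hTne := ⟨_, rfl⟩
  have hmemmax := (T.image (fun α => α.1)).max'_mem hTne
  rw [← hαs] at hmemmax
  obtain ⟨αm, hαmT, hαm⟩ := Finset.mem_image.mp hmemmax
  have hmax : ∀ β ∈ T, β.1 ≤ αs := by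
    intro β hβ
    rw [hαs]
    exact Finset.le_max' _ _ (Finset.mem_image.mpr ⟨β, hβ, rfl⟩)
  have hgαm : g αm ≠ 0 := by
    have := hαmT
    rw [hT, Finset.mem_filter] at this
    exact this.2
  have hαsD : αs ∈ D := by rw [← hαm]; exact αm.2
  have hαsfacts : αs ≤ ρ ∧ Lam αs ∧ Lam (ρ - αs) := by
    have h1 := (hDmem αs).mp hαsD
    exact ⟨by omega, h1.2.1, h1.2.2⟩
  obtain ⟨hαsρ, hLamαs, hLamρα⟩ := hαsfacts
  have hDfacts : ∀ β : {x // x ∈ D}, β.1 ≤ ρ ∧ Lam β.1 := by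
    intro β
    have h1 := (hDmem β.1).mp β.2
    exact ⟨by omega, h1.2.1⟩
  -- extend sums over supp to sums over univ
  have hext : ∀ f : Fin n → F, (∑ k ∈ supp, w k * f k) = ∑ k, w k * f k := by
    intro f
    apply Finset.sum_subset (Finset.subset_univ supp)
    intro k _ hk
    have hvk : v k = 0 := by
      by_contra hne
      exact hk (by simp [hsupp, hne])
    rw [hw, hvk, zero_pow hq0, zero_mul]
  have hgk : ∀ k : {k // k ∈ supp},
      (∑ α : {x // x ∈ D}, g α * ((pt k.1).1 ^ I α.1 * (pt k.1).2 ^ J α.1)) = 0 := by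
    intro k
    have h1 := congrFun hgsum k
    simpa using h1
  have hmain : ∑ β : {x // x ∈ D}, g β *
      (∑ k, w k * (((pt k).1 ^ I β.1 * (pt k).2 ^ J β.1) *
        ((pt k).1 ^ I (ρ - αs) * (pt k).2 ^ J (ρ - αs)))) = 0 := by
    have h1 : ∀ β : {x // x ∈ D}, g β *
        (∑ k, w k * (((pt k).1 ^ I β.1 * (pt k).2 ^ J β.1) *
          ((pt k).1 ^ I (ρ - αs) * (pt k).2 ^ J (ρ - αs))))
        = ∑ k ∈ supp, (w k * ((pt k).1 ^ I (ρ - αs) * (pt k).2 ^ J (ρ - αs))) *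
            (g β * ((pt k).1 ^ I β.1 * (pt k).2 ^ J β.1)) := by
      intro β
      rw [← hext, Finset.mul_sum]
      apply Finset.sum_congr rfl
      intro k _
      ring
    rw [Finset.sum_congr rfl (fun β _ => h1 β), Finset.sum_comm]
    apply Finset.sum_eq_zero
    intro k hk
    rw [← Finset.mul_sum]
    exact mul_eq_zero_of_right _ (hgk ⟨k, hk⟩)
  have hsingle : ∀ β : {x // x ∈ D}, β ∈ Finset.univ → β ≠ αm → g β *
      (∑ k, w k * (((pt k).1 ^ I β.1 * (pt k).2 ^ J β.1) *
        ((pt k).1 ^ I (ρ - αs) * (pt k).2 ^ J (ρ - αs)))) = 0 := by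
    intro β _ hβ
    by_cases hgβ : g β = 0
    · rw [hgβ, zero_mul]
    · have hβT : β ∈ T := by simp [hT, hgβ]
      have hβlt : β.1 < αs := by
        rcases lt_or_eq_of_le (hmax β hβT) with h | h
        · exact h
        · exact absurd (Subtype.ext (h.trans hαm.symm)) hβ
      obtain ⟨hβρ, hLamβ⟩ := hDfacts β
      apply mul_eq_zero_of_right
      rw [hpair β.1 (ρ - αs) hLamβ hLamρα]
      apply hlow
      have horder : q * (I β.1 + I (ρ - αs)) + 3 * (J β.1 + J (ρ - αs))
          = (q * I β.1 + 3 * J β.1) + (q * I (ρ - αs) + 3 * J (ρ - αs)) := by ring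
      rw [horder, ← hIJ β.1 hLamβ, ← hIJ (ρ - αs) hLamρα]
      omega
  rw [Finset.sum_eq_single αm hsingle
    (fun h => absurd (Finset.mem_univ αm) h)] at hmain
  have hcval : (∑ k, w k * (((pt k).1 ^ I αm.1 * (pt k).2 ^ J αm.1) *
      ((pt k).1 ^ I (ρ - αs) * (pt k).2 ^ J (ρ - αs)))) = s i₀ j₀ := by
    rw [hαm, hpair αs (ρ - αs) hLamαs hLamρα]
    apply hdiag
    have horder : q * (I αs + I (ρ - αs)) + 3 * (J αs + J (ρ - αs))
        = (q * I αs + 3 * J αs) + (q * I (ρ - αs) + 3 * J (ρ - αs)) := by ring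
    rw [horder, ← hIJ αs hLamαs, ← hIJ (ρ - αs) hLamρα]
    omega
  rw [hcval] at hmain
  rcases mul_eq_zero.mp hmain with h | h
  · exact hgαm h
  · exact hs₀ h
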